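/- The ellipse E = (Aⁿ − I)^{−1} B(0, e^{−nτ}) contains the parallelogram with vertices ±(1/2)(λ_{n,2}/√(1+γ²))(1, γ) ± (1/2)(λ_{n,1}/√(1+β²))(1, β), where λ_{n,1} = e^{−τn}/|1 − λ₁ⁿ| and λ_{n,2} = e^{−τn}/|λ₂ⁿ − 1|. -/

import Mathlib

/-- The vector `(1, γ)` as a point of Euclidean `ℝ²`. -/
noncomputable def eigVec (γ : ℝ) : EuclideanSpace ℝ (Fin 2) :=
  (WithLp.equiv 2 (Fin 2 → ℝ)).symm ![1, γ]

lemma norm_eigVec (γ : ℝ) : ‖eigVec γ‖ = Real.sqrt (1 + γ ^ 2) := by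
  rw [EuclideanSpace.norm_eq]
  congr 1
  simp [eigVec, Fin.sum_univ_two, sq_abs]

lemma pow_mulVec_eig (A : Matrix (Fin 2) (Fin 2) ℝ) (l : ℝ) (v : Fin 2 → ℝ)
    (h : A.mulVec v = l • v) (n : ℕ) : (A ^ n).mulVec v = l ^ n • v := by
  induction n with
  | zero => simp [Matrix.one_mulVec]
  | succ k ih =>
      rw [pow_succ, ← Matrix.mulVec_mulVec, h, Matrix.mulVec_smul, ih, smul_smul,
        ← pow_succ']

lemma toEuc_eig (A : Matrix (Fin 2) (Fin 2) ℝ) (l : ℝ) (γ : ℝ)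
    (h : A.mulVec ![1, γ] = l • ![1, γ]) (n : ℕ) :
    Matrix.toEuclideanLin (A ^ n - 1) (eigVec γ) = (l ^ n - 1) • eigVec γ := by
  rw [eigVec, WithLp.equiv_symm_apply, Matrix.toEuclideanLin_apply_piLp_toLp, Matrix.sub_mulVec,
    Matrix.one_mulVec, pow_mulVec_eig A l _ h n, sub_smul, one_smul]
  rfl

/-- The ellipse `(Aⁿ - I)⁻¹ B(0, e^{-nτ})` contains the parallelogram with
vertices `± (λ_{n,2}/2) (1,γ)/√(1+γ²) ± (λ_{n,1}/2) (1,β)/√(1+β²)`, where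
`λ_{n,1} = e^{-τn}/|1 - λ₁ⁿ|` and `λ_{n,2} = e^{-τn}/|λ₂ⁿ - 1|`. -/
theorem inscribed_parallelogram_subset_ellipse
    (A : Matrix (Fin 2) (Fin 2) ℝ) (l₁ l₂ γ β : ℝ)
    (h0 : 0 < |l₁|) (h1 : |l₁| < 1) (h2 : 1 < |l₂|)
    (hγ : A.mulVec ![1, γ] = l₂ • ![1, γ])
    (hβ : A.mulVec ![1, β] = l₁ • ![1, β])
    (τ : ℝ) (hτ : 0 < τ) (n : ℕ) (hn : 1 ≤ n)
    (hinv : IsUnit (A ^ n - 1)) :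
    {x : EuclideanSpace ℝ (Fin 2) | ∃ t s : ℝ,
        |t| ≤ Real.exp (-τ * n) / |l₂ ^ n - 1| / 2 ∧
        |s| ≤ Real.exp (-τ * n) / |1 - l₁ ^ n| / 2 ∧
        x = (t / Real.sqrt (1 + γ ^ 2)) • eigVec γ
          + (s / Real.sqrt (1 + β ^ 2)) • eigVec β}
      ⊆ {x : EuclideanSpace ℝ (Fin 2) |
          ‖Matrix.toEuclideanLin (A ^ n - 1) x‖ ≤ Real.exp (-(n : ℝ) * τ)} := by
  rintro x ⟨t, s, ht, hs, rfl⟩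
  set r := Real.exp (-τ * n) with hr
  have hc2 : 0 < |l₂ ^ n - 1| := by
    rw [abs_pos, sub_ne_zero]
    intro h
    have : |l₂ ^ n| = 1 := by rw [h]; simp
    rw [abs_pow] at this
    nlinarith [one_lt_pow₀ h2 (by omega : n ≠ 0)]
  have hc1 : 0 < |1 - l₁ ^ n| := by
    rw [abs_pos, sub_ne_zero]
    intro h
    have h' : |l₁ ^ n| < 1 := by
      rw [abs_pow]
      exact pow_lt_one₀ (abs_nonneg _) h1 (by omega)
    rw [← h] at h'; simp at h'
  have hγpos : 0 < Real.sqrt (1 + γ ^ 2) := Real.sqrt_pos.2 (by positivity)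
  have hβpos : 0 < Real.sqrt (1 + β ^ 2) := Real.sqrt_pos.2 (by positivity)
  have key : Matrix.toEuclideanLin (A ^ n - 1)
      ((t / Real.sqrt (1 + γ ^ 2)) • eigVec γ + (s / Real.sqrt (1 + β ^ 2)) • eigVec β)
      = (t / Real.sqrt (1 + γ ^ 2) * (l₂ ^ n - 1)) • eigVec γ
        + (s / Real.sqrt (1 + β ^ 2) * (l₁ ^ n - 1)) • eigVec β := by
    rw [map_add, map_smul, map_smul, toEuc_eig A l₂ γ hγ n, toEuc_eig A l₁ β hβ n,
      smul_smul, smul_smul]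
  rw [Set.mem_setOf_eq, key]
  have hb1 : |t| * |l₂ ^ n - 1| ≤ r / 2 := by
    calc |t| * |l₂ ^ n - 1| ≤ r / |l₂ ^ n - 1| / 2 * |l₂ ^ n - 1| :=
          mul_le_mul_of_nonneg_right ht (abs_nonneg _)
      _ = r / 2 := by field_simp
  have hb2 : |s| * |l₁ ^ n - 1| ≤ r / 2 := by
    have : |l₁ ^ n - 1| = |1 - l₁ ^ n| := abs_sub_comm _ _
    rw [this]
    calc |s| * |1 - l₁ ^ n| ≤ r / |1 - l₁ ^ n| / 2 * |1 - l₁ ^ n| :=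
          mul_le_mul_of_nonneg_right hs (abs_nonneg _)
      _ = r / 2 := by field_simp
  calc ‖(t / Real.sqrt (1 + γ ^ 2) * (l₂ ^ n - 1)) • eigVec γ
        + (s / Real.sqrt (1 + β ^ 2) * (l₁ ^ n - 1)) • eigVec β‖
      ≤ ‖(t / Real.sqrt (1 + γ ^ 2) * (l₂ ^ n - 1)) • eigVec γ‖
        + ‖(s / Real.sqrt (1 + β ^ 2) * (l₁ ^ n - 1)) • eigVec β‖ := norm_add_le _ _
    _ = |t| * |l₂ ^ n - 1| + |s| * |l₁ ^ n - 1| := by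
        rw [norm_smul, norm_smul, norm_eigVec, norm_eigVec, Real.norm_eq_abs,
          Real.norm_eq_abs, abs_mul, abs_mul, abs_div, abs_div,
          abs_of_pos hγpos, abs_of_pos hβpos]
        field_simp
    _ ≤ r / 2 + r / 2 := add_le_add hb1 hb2
    _ = r := by ring
    _ = Real.exp (-(n : ℝ) * τ) := by rw [hr]; ring_nf
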